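/- Let a : ℝⁿ × ℝⁿ → ℂ satisfy |∂^α_x ∂^β_ξ a(x,ξ)| ≤ C_{α,β} ⟨x⟩^{m−|α|} ⟨ξ⟩^{μ−|β|} with m, μ ≤ m_p ≤ 0. Let k ≥ 1 and a_k(x,ξ) = a(2^k x, 2^{−k}ξ). Then on the region 1/4 ≤ |x| ≤ 4, |∂^α_x ∂^β_ξ a_k(x,ξ)| ≤ C'_{α,β} ⟨ξ⟩^{m_p−|β|}, with C'_{α,β} independent of k. -/

import Mathlib

open Set

variable {E G : Type*} [NormedAddCommGroup E] [NormedSpace ℝ E]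
  [NormedAddCommGroup G] [NormedSpace ℝ G]

noncomputable def stmt18smulCLE (c : ℝ) (hc : c ≠ 0) : E ≃L[ℝ] E :=
{ toLinearEquiv :=
  { toFun := fun x => c • x
    invFun := fun x => c⁻¹ • x
    map_add' := smul_add c
    map_smul' := fun r x => smul_comm c r x
    left_inv := fun x => by simp [smul_smul, inv_mul_cancel₀ hc]
    right_inv := fun x => by simp [smul_smul, mul_inv_cancel₀ hc] }
  continuous_toFun := continuous_const_smul c
  continuous_invFun := continuous_const_smul c⁻¹ }

@[simp] lemma stmt18smulCLE_apply (c : ℝ) (hc : c ≠ 0) (x : E) :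
    stmt18smulCLE c hc x = c • x := rfl

lemma stmt18smulCLE_norm_le (c : ℝ) (hc : c ≠ 0) :
    ‖((stmt18smulCLE c hc : E ≃L[ℝ] E) : E →L[ℝ] E)‖ ≤ |c| :=
  ContinuousLinearMap.opNorm_le_bound _ (abs_nonneg c) fun x => by
    simp [norm_smul, Real.norm_eq_abs]

theorem stmt18_comp_right {F : Type*} [NormedAddCommGroup F] [NormedSpace ℝ F]
    (g : G ≃L[ℝ] E) (f : E → F) (x : G) (i : ℕ) :
    iteratedFDeriv ℝ i (f ∘ g) x =
      (iteratedFDeriv ℝ i f (g x)).compContinuousLinearMap fun _ => g := by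
  simp only [← iteratedFDerivWithin_univ]
  have := g.iteratedFDerivWithin_comp_right (s := univ) f uniqueDiffOn_univ (mem_univ (g x)) i
  simpa [preimage_univ] using this

theorem stmt18_comp_left {F : Type*} [NormedAddCommGroup F] [NormedSpace ℝ F]
    (g : F ≃L[ℝ] G) (f : E → F) (x : E) (i : ℕ) :
    iteratedFDeriv ℝ i (⇑g ∘ f) x =
      (g : F →L[ℝ] G).compContinuousMultilinearMap (iteratedFDeriv ℝ i f x) := by
  simp only [← iteratedFDerivWithin_univ]
  exact g.iteratedFDerivWithin_comp_left f uniqueDiffOn_univ (mem_univ x) i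

set_option maxHeartbeats 1000000 in
theorem stmt18_scaled_bound (b : E → E → G) (c d : ℝ) (hc : c ≠ 0) (hd : d ≠ 0)
    (i j : ℕ) (x ξ : E) :
    ‖iteratedFDeriv ℝ i (fun x' => iteratedFDeriv ℝ j (fun ξ' => b (c • x') (d • ξ')) ξ) x‖ ≤
      |c| ^ i * |d| ^ j *
        ‖iteratedFDeriv ℝ i
          (fun x'' => iteratedFDeriv ℝ j (fun ξ' => b x'' ξ') (d • ξ)) (c • x)‖ := by
  set e₁ : E ≃L[ℝ] E := stmt18smulCLE c hc with he₁
  set e₂ : E ≃L[ℝ] E := stmt18smulCLE d hd with he₂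
  set H : E → ContinuousMultilinearMap ℝ (fun _ : Fin j => E) G :=
    fun x'' => iteratedFDeriv ℝ j (fun ξ' => b x'' ξ') (d • ξ) with hH
  set Ψ := ContinuousLinearEquiv.continuousMultilinearMapCongrLeft G (fun _ : Fin j => e₂) with hΨ
  have h1 : (fun x' => iteratedFDeriv ℝ j (fun ξ' => b (c • x') (d • ξ')) ξ)
      = (⇑Ψ ∘ H) ∘ ⇑e₁ := by
    funext x'
    have h2 : (fun ξ' => b (c • x') (d • ξ')) = (fun ξ'' => b (c • x') ξ'') ∘ ⇑e₂ := rfl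
    show _ = Ψ (H (e₁ x'))
    rw [h2, stmt18_comp_right e₂ _ ξ j]
    rfl
  rw [h1, stmt18_comp_right e₁ (⇑Ψ ∘ H) x i, stmt18_comp_left Ψ H (e₁ x) i]
  set Ψc : ContinuousMultilinearMap ℝ (fun _ : Fin j => E) G →L[ℝ]
      ContinuousMultilinearMap ℝ (fun _ : Fin j => E) G := ↑Ψ with hΨc
  set e₁c : E →L[ℝ] E := ↑e₁ with he₁c
  set N := iteratedFDeriv ℝ i H (e₁ x) with hN
  have hΨnorm : ‖Ψc‖ ≤ |d| ^ j := by
    apply ContinuousLinearMap.opNorm_le_bound _ (by positivity)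
    intro M
    have hMc : Ψc M = M.compContinuousLinearMap fun _ : Fin j => (e₂ : E →L[ℝ] E) := rfl
    rw [hMc]
    have h3 : ‖M.compContinuousLinearMap fun _ : Fin j => (e₂ : E →L[ℝ] E)‖ ≤
        ‖M‖ * ∏ _l : Fin j, ‖((e₂ : E ≃L[ℝ] E) : E →L[ℝ] E)‖ :=
      M.norm_compContinuousLinearMap_le _
    rw [Finset.prod_const, Finset.card_univ, Fintype.card_fin] at h3
    refine h3.trans ?_
    rw [mul_comm]
    exact mul_le_mul_of_nonneg_right
      (pow_le_pow_left₀ (norm_nonneg _) (stmt18smulCLE_norm_le d hd) j) (norm_nonneg _)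
  have key : ‖(Ψc.compContinuousMultilinearMap N).compContinuousLinearMap
      (fun _ : Fin i => e₁c)‖ ≤
      ‖Ψc.compContinuousMultilinearMap N‖ * ∏ _l : Fin i, ‖e₁c‖ :=
    ContinuousMultilinearMap.norm_compContinuousLinearMap_le _ _
  rw [Finset.prod_const, Finset.card_univ, Fintype.card_fin] at key
  refine le_trans key ?_
  have step1 : ‖Ψc.compContinuousMultilinearMap N‖ * ‖e₁c‖ ^ i ≤
      (|d| ^ j * ‖N‖) * |c| ^ i := by
    refine mul_le_mul ?_ (pow_le_pow_left₀ (norm_nonneg _) (stmt18smulCLE_norm_le c hc) i)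
      (by positivity) (by positivity)
    exact le_trans (ContinuousLinearMap.norm_compContinuousMultilinearMap_le _ _)
      (mul_le_mul_of_nonneg_right hΨnorm (norm_nonneg _))
  refine le_trans step1 (le_of_eq ?_)
  have hx : e₁ x = c • x := rfl
  rw [hN, hx]; ring


set_option maxHeartbeats 1000000 in
theorem stmt18_numeric (m μ mp : ℝ) (hm : m ≤ mp) (hμ : μ ≤ mp) (hmp : mp ≤ 0)
    (i j : ℕ) (c : ℝ) (hc : 2 ≤ c) (s t : ℝ) (ht : 0 ≤ t) (hs1 : 1/4 ≤ s) :
    c ^ i * c⁻¹ ^ j *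
      (Real.sqrt (1 + (c * s) ^ 2) ^ (m - (i : ℝ)) *
        Real.sqrt (1 + (c⁻¹ * t) ^ 2) ^ (μ - (j : ℝ)))
      ≤ (4 : ℝ) ^ ((i : ℝ) - m) *
          (Real.sqrt 2 ^ ((j : ℝ) - mp) + Real.sqrt 2 ^ ((j : ℝ) - μ)) *
          Real.sqrt (1 + t ^ 2) ^ (mp - (j : ℝ)) := by
  have hc0 : (0 : ℝ) < c := lt_of_lt_of_le two_pos hc
  have hc1 : (1 : ℝ) ≤ c := by linarith
  have hs0 : (0 : ℝ) < s := by linarith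
  have hμ0 : μ ≤ 0 := le_trans hμ hmp
  have hm0 : m ≤ 0 := le_trans hm hmp
  have hjn : (0 : ℝ) ≤ (j : ℝ) := Nat.cast_nonneg j
  have hin : (0 : ℝ) ≤ (i : ℝ) := Nat.cast_nonneg i
  have e1 : m - (i : ℝ) ≤ 0 := by linarith
  have e2 : μ - (j : ℝ) ≤ 0 := by linarith
  have e3 : mp - (j : ℝ) ≤ 0 := by linarith
  set A := Real.sqrt (1 + (c * s) ^ 2) with hA
  set B := Real.sqrt (1 + (c⁻¹ * t) ^ 2) with hB
  set T := Real.sqrt (1 + t ^ 2) with hT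
  have hApos : 0 < A := Real.sqrt_pos.mpr (by positivity)
  have hB1 : 1 ≤ B :=
    calc (1:ℝ) = Real.sqrt 1 := Real.sqrt_one.symm
      _ ≤ B := Real.sqrt_le_sqrt (by nlinarith [sq_nonneg (c⁻¹ * t)])
  have hT1 : 1 ≤ T :=
    calc (1:ℝ) = Real.sqrt 1 := Real.sqrt_one.symm
      _ ≤ T := Real.sqrt_le_sqrt (by nlinarith [sq_nonneg t])
  have hT0 : 0 < T := lt_of_lt_of_le one_pos hT1
  have hTt : t ≤ T :=
    calc t = Real.sqrt (t ^ 2) := (Real.sqrt_sq ht).symm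
      _ ≤ T := Real.sqrt_le_sqrt (by linarith)
  have hs2pos : (0:ℝ) < Real.sqrt 2 := Real.sqrt_pos.mpr two_pos
  -- Step 1: A ≥ c/4
  have hcsA : c * s ≤ A :=
    calc c * s = Real.sqrt ((c * s) ^ 2) := (Real.sqrt_sq (by positivity)).symm
      _ ≤ A := Real.sqrt_le_sqrt (by nlinarith [sq_nonneg (c * s)])
  have hA4 : c / 4 ≤ A := le_trans (by nlinarith) hcsA
  have hArpow : A ^ (m - (i : ℝ)) ≤ (c / 4) ^ (m - (i : ℝ)) :=
    Real.rpow_le_rpow_of_nonpos (by positivity) hA4 e1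
  -- algebraic identity
  have h4 : (c / 4) ^ (m - (i : ℝ)) = c ^ (m - (i : ℝ)) * (4 : ℝ) ^ ((i : ℝ) - m) := by
    rw [Real.div_rpow hc0.le (by norm_num : (0:ℝ) ≤ 4), div_eq_mul_inv,
      ← Real.rpow_neg (by norm_num : (0:ℝ) ≤ 4), neg_sub]
  have h5 : c ^ i * c ^ (m - (i : ℝ)) = c ^ m := by
    rw [← Real.rpow_natCast c i, ← Real.rpow_add hc0]
    ring_nf
  have h6 : c⁻¹ ^ j = c ^ (-(j : ℝ)) := by
    rw [inv_pow, ← Real.rpow_natCast c j, ← Real.rpow_neg hc0.le]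
  -- KEY inequality
  have key : c ^ m * c ^ (-(j : ℝ)) * B ^ (μ - (j : ℝ)) ≤
      (Real.sqrt 2 ^ ((j : ℝ) - mp) + Real.sqrt 2 ^ ((j : ℝ) - μ)) * T ^ (mp - (j : ℝ)) := by
    have hTnn : (0:ℝ) ≤ T ^ (mp - (j:ℝ)) := Real.rpow_nonneg hT0.le _
    rcases le_total t c with h | h
    · -- t ≤ c
      have hBle : B ^ (μ - (j : ℝ)) ≤ 1 :=
        Real.rpow_le_one_of_one_le_of_nonpos hB1 e2
      have h1 : c ^ m ≤ c ^ mp := Real.rpow_le_rpow_of_exponent_le hc1 hm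
      have hTle : T ≤ Real.sqrt 2 * c := by
        rw [hT, show Real.sqrt 2 * c = Real.sqrt (2 * c ^ 2) by
          rw [Real.sqrt_mul (by norm_num : (0:ℝ) ≤ 2), Real.sqrt_sq hc0.le]]
        exact Real.sqrt_le_sqrt (by nlinarith)
      have h2 : (Real.sqrt 2 * c) ^ (mp - (j : ℝ)) ≤ T ^ (mp - (j : ℝ)) :=
        Real.rpow_le_rpow_of_nonpos hT0 hTle e3
      calc c ^ m * c ^ (-(j : ℝ)) * B ^ (μ - (j : ℝ))
          ≤ c ^ mp * c ^ (-(j : ℝ)) * 1 :=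
            mul_le_mul (mul_le_mul_of_nonneg_right h1 (Real.rpow_nonneg hc0.le _))
              hBle (Real.rpow_nonneg (le_trans zero_le_one hB1) _) (by positivity)
        _ = c ^ (mp - (j : ℝ)) := by
            rw [mul_one, ← Real.rpow_add hc0]
            ring_nf
        _ = Real.sqrt 2 ^ ((j : ℝ) - mp) * (Real.sqrt 2 * c) ^ (mp - (j : ℝ)) := by
            rw [Real.mul_rpow hs2pos.le hc0.le, ← mul_assoc,
              ← Real.rpow_add hs2pos,
              show (j : ℝ) - mp + (mp - (j : ℝ)) = 0 by ring, Real.rpow_zero, one_mul]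
        _ ≤ Real.sqrt 2 ^ ((j : ℝ) - mp) * T ^ (mp - (j : ℝ)) :=
            mul_le_mul_of_nonneg_left h2 (Real.rpow_nonneg hs2pos.le _)
        _ ≤ (Real.sqrt 2 ^ ((j : ℝ) - mp) + Real.sqrt 2 ^ ((j : ℝ) - μ)) * T ^ (mp - (j : ℝ)) :=
            mul_le_mul_of_nonneg_right
              (le_add_of_nonneg_right (Real.rpow_nonneg hs2pos.le _)) hTnn
    · -- c ≤ t
      have htc : c ≤ T := le_trans h hTt
      have hcinv0 : (0:ℝ) < c⁻¹ := by positivity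
      have hcinv1 : c⁻¹ ≤ 1 := by
        rw [inv_le_one_iff₀]; right; exact hc1
      have hq : (0:ℝ) < c⁻¹ * T / Real.sqrt 2 := by positivity
      have hBge : c⁻¹ * T / Real.sqrt 2 ≤ B := by
        have hsq : (c⁻¹ * T / Real.sqrt 2) ^ 2 = c⁻¹ ^ 2 * (1 + t ^ 2) / 2 := by
          have hT2 : T ^ 2 = 1 + t ^ 2 := Real.sq_sqrt (by positivity)
          have h2s : Real.sqrt 2 ^ 2 = 2 := Real.sq_sqrt (by norm_num)
          rw [div_pow, mul_pow, hT2, h2s]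
        rw [hB, ← Real.sqrt_sq hq.le, hsq]
        apply Real.sqrt_le_sqrt
        have hct2 : c⁻¹ ^ 2 ≤ 1 := by nlinarith
        have := sq_nonneg (c⁻¹ * t)
        rw [mul_pow]
        nlinarith [sq_nonneg t, sq_nonneg (c⁻¹ * t), mul_pow c⁻¹ t 2]
      have hBpow : B ^ (μ - (j : ℝ)) ≤ (c⁻¹ * T / Real.sqrt 2) ^ (μ - (j : ℝ)) :=
        Real.rpow_le_rpow_of_nonpos hq hBge e2
      have hexp : (c⁻¹ * T / Real.sqrt 2) ^ (μ - (j : ℝ)) =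
          c ^ ((j : ℝ) - μ) * Real.sqrt 2 ^ ((j : ℝ) - μ) * T ^ (μ - (j : ℝ)) := by
        rw [Real.div_rpow (by positivity) hs2pos.le,
          Real.mul_rpow hcinv0.le hT0.le,
          Real.inv_rpow hc0.le, ← Real.rpow_neg hc0.le, neg_sub,
          div_eq_mul_inv, ← Real.rpow_neg hs2pos.le, neg_sub]
        ring
      have hTsplit : T ^ (μ - (j : ℝ)) = T ^ (μ - mp) * T ^ (mp - (j : ℝ)) := by
        rw [← Real.rpow_add hT0]; ring_nf
      have hTc : T ^ (μ - mp) ≤ c ^ (μ - mp) :=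
        Real.rpow_le_rpow_of_nonpos hc0 htc (by linarith)
      have hcol : c ^ m * c ^ (-(j : ℝ)) * (c ^ ((j : ℝ) - μ) * c ^ (μ - mp)) = c ^ (m - mp) := by
        rw [← Real.rpow_add hc0, ← Real.rpow_add hc0, ← Real.rpow_add hc0]
        ring_nf
      have hcmp : c ^ (m - mp) ≤ 1 :=
        Real.rpow_le_one_of_one_le_of_nonpos hc1 (by linarith)
      calc c ^ m * c ^ (-(j : ℝ)) * B ^ (μ - (j : ℝ))
          ≤ c ^ m * c ^ (-(j : ℝ)) *
              (c ^ ((j : ℝ) - μ) * Real.sqrt 2 ^ ((j : ℝ) - μ) *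
                (T ^ (μ - mp) * T ^ (mp - (j : ℝ)))) := by
            rw [← hTsplit, ← hexp]
            exact mul_le_mul_of_nonneg_left hBpow (by positivity)
        _ ≤ c ^ m * c ^ (-(j : ℝ)) *
              (c ^ ((j : ℝ) - μ) * Real.sqrt 2 ^ ((j : ℝ) - μ) *
                (c ^ (μ - mp) * T ^ (mp - (j : ℝ)))) := by
            have : T ^ (μ - mp) * T ^ (mp - (j:ℝ)) ≤ c ^ (μ - mp) * T ^ (mp - (j:ℝ)) :=
              mul_le_mul_of_nonneg_right hTc hTnn
            refine mul_le_mul_of_nonneg_left (mul_le_mul_of_nonneg_left this ?_) ?_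
            · positivity
            · positivity
        _ = c ^ (m - mp) * (Real.sqrt 2 ^ ((j : ℝ) - μ) * T ^ (mp - (j : ℝ))) := by
            rw [← hcol]; ring
        _ ≤ 1 * (Real.sqrt 2 ^ ((j : ℝ) - μ) * T ^ (mp - (j : ℝ))) :=
            mul_le_mul_of_nonneg_right hcmp (by positivity)
        _ = Real.sqrt 2 ^ ((j : ℝ) - μ) * T ^ (mp - (j : ℝ)) := one_mul _
        _ ≤ (Real.sqrt 2 ^ ((j : ℝ) - mp) + Real.sqrt 2 ^ ((j : ℝ) - μ)) * T ^ (mp - (j : ℝ)) :=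
            mul_le_mul_of_nonneg_right
              (le_add_of_nonneg_left (Real.rpow_nonneg hs2pos.le _)) hTnn
  -- Combine
  calc c ^ i * c⁻¹ ^ j * (A ^ (m - (i : ℝ)) * B ^ (μ - (j : ℝ)))
      ≤ c ^ i * c⁻¹ ^ j * ((c / 4) ^ (m - (i : ℝ)) * B ^ (μ - (j : ℝ))) := by
        refine mul_le_mul_of_nonneg_left
          (mul_le_mul_of_nonneg_right hArpow (Real.rpow_nonneg ?_ _)) (by positivity)
        exact le_trans zero_le_one hB1
    _ = (4 : ℝ) ^ ((i : ℝ) - m) * (c ^ m * c ^ (-(j : ℝ)) * B ^ (μ - (j : ℝ))) := by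
        rw [h4, h6, ← h5]; ring
    _ ≤ (4 : ℝ) ^ ((i : ℝ) - m) *
          ((Real.sqrt 2 ^ ((j : ℝ) - mp) + Real.sqrt 2 ^ ((j : ℝ) - μ)) * T ^ (mp - (j : ℝ))) :=
        mul_le_mul_of_nonneg_left key (by positivity)
    _ = (4 : ℝ) ^ ((i : ℝ) - m) * (Real.sqrt 2 ^ ((j : ℝ) - mp) + Real.sqrt 2 ^ ((j : ℝ) - μ)) *
          T ^ (mp - (j : ℝ)) := by ring




/-- rescaled amplitude estimate. If
`|∂^α_x ∂^β_ξ a(x,ξ)| ≤ C_{α,β}⟨x⟩^{m−|α|}⟨ξ⟩^{μ−|β|}` with `m, μ ≤ m_p ≤ 0`, then for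
`a_k(x,ξ) = a(2^k x, 2^{−k}ξ)` and `1/4 ≤ |x| ≤ 4`,
`|∂^α_x ∂^β_ξ a_k(x,ξ)| ≤ C'_{α,β}⟨ξ⟩^{m_p−|β|}` with `C'_{α,β}` independent of
`k ≥ 1`. -/
theorem stmt18 (n : ℕ)
    (a : EuclideanSpace ℝ (Fin n) → EuclideanSpace ℝ (Fin n) → ℂ)
    (m μ mp : ℝ) (hm : m ≤ mp) (hμ : μ ≤ mp) (hmp : mp ≤ 0)
    (C : ℕ → ℕ → ℝ)
    (ha : ∀ (i j : ℕ) (x ξ : EuclideanSpace ℝ (Fin n)),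
      ‖iteratedFDeriv ℝ i (fun x' => iteratedFDeriv ℝ j (fun ξ' => a x' ξ') ξ) x‖ ≤
        C i j * Real.sqrt (1 + ‖x‖ ^ 2) ^ (m - (i : ℝ)) *
          Real.sqrt (1 + ‖ξ‖ ^ 2) ^ (μ - (j : ℝ))) :
    ∃ C' : ℕ → ℕ → ℝ, (∀ i j, 0 < C' i j) ∧
      ∀ (k : ℕ), 1 ≤ k →
        ∀ (i j : ℕ) (x ξ : EuclideanSpace ℝ (Fin n)),
          (1 : ℝ) / 4 ≤ ‖x‖ → ‖x‖ ≤ 4 →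
          ‖iteratedFDeriv ℝ i
              (fun x' => iteratedFDeriv ℝ j
                (fun ξ' => a ((2 : ℝ) ^ (k : ℝ) • x') ((2 : ℝ) ^ (-(k : ℝ)) • ξ')) ξ) x‖ ≤
            C' i j * Real.sqrt (1 + ‖ξ‖ ^ 2) ^ (mp - (j : ℝ)) := by
  have hC : ∀ i j, 0 ≤ C i j := by
    intro i j
    have h := ha i j 0 0
    simp only [norm_zero, ne_eq, OfNat.ofNat_ne_zero, not_false_eq_true, zero_pow, add_zero,
      Real.sqrt_one, Real.one_rpow, mul_one] at h
    exact le_trans (norm_nonneg _) h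
  refine ⟨fun i j => (C i j + 1) * ((4 : ℝ) ^ ((i : ℝ) - m) *
      (Real.sqrt 2 ^ ((j : ℝ) - mp) + Real.sqrt 2 ^ ((j : ℝ) - μ))), ?_, ?_⟩
  · intro i j
    have := hC i j
    have h2 : (0:ℝ) < Real.sqrt 2 := Real.sqrt_pos.mpr two_pos
    positivity
  · intro k hk i j x ξ hx1 _
    set c : ℝ := (2 : ℝ) ^ (k : ℝ) with hcdef
    have hc0 : (0 : ℝ) < c := Real.rpow_pos_of_pos two_pos _
    have hc2 : (2 : ℝ) ≤ c := by
      calc (2 : ℝ) = 2 ^ (1 : ℝ) := (Real.rpow_one 2).symm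
        _ ≤ 2 ^ (k : ℝ) := Real.rpow_le_rpow_of_exponent_le one_le_two (by exact_mod_cast hk)
    have hd : (2 : ℝ) ^ (-(k : ℝ)) = c⁻¹ := by
      rw [hcdef, ← Real.rpow_neg (by norm_num : (0:ℝ) ≤ 2)]
    have hcne : c ≠ 0 := hc0.ne'
    have hdne : c⁻¹ ≠ 0 := inv_ne_zero hcne
    simp only [hd]
    have main := stmt18_scaled_bound a c c⁻¹ hcne hdne i j x ξ
    refine le_trans main ?_
    rw [abs_of_pos hc0, abs_of_pos (inv_pos.mpr hc0)]
    have hb := ha i j (c • x) (c⁻¹ • ξ)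
    have hnx : ‖c • x‖ = c * ‖x‖ := by
      rw [norm_smul, Real.norm_eq_abs, abs_of_pos hc0]
    have hnξ : ‖c⁻¹ • ξ‖ = c⁻¹ * ‖ξ‖ := by
      rw [norm_smul, Real.norm_eq_abs, abs_of_pos (inv_pos.mpr hc0)]
    rw [hnx, hnξ] at hb
    set S := Real.sqrt 2 ^ ((j : ℝ) - mp) + Real.sqrt 2 ^ ((j : ℝ) - μ) with hS
    have hSnn : 0 ≤ S := by
      have h2 : (0:ℝ) < Real.sqrt 2 := Real.sqrt_pos.mpr two_pos
      positivity
    have h4nn : (0:ℝ) ≤ (4 : ℝ) ^ ((i : ℝ) - m) := Real.rpow_nonneg (by norm_num) _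
    have hTnn : (0:ℝ) ≤ Real.sqrt (1 + ‖ξ‖ ^ 2) ^ (mp - (j : ℝ)) :=
      Real.rpow_nonneg (Real.sqrt_nonneg _) _
    calc c ^ i * c⁻¹ ^ j *
          ‖iteratedFDeriv ℝ i
            (fun x'' => iteratedFDeriv ℝ j (fun ξ' => a x'' ξ') (c⁻¹ • ξ)) (c • x)‖
        ≤ c ^ i * c⁻¹ ^ j *
            (C i j * Real.sqrt (1 + (c * ‖x‖) ^ 2) ^ (m - (i : ℝ)) *
              Real.sqrt (1 + (c⁻¹ * ‖ξ‖) ^ 2) ^ (μ - (j : ℝ))) :=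
          mul_le_mul_of_nonneg_left hb (by positivity)
      _ = C i j * (c ^ i * c⁻¹ ^ j *
            (Real.sqrt (1 + (c * ‖x‖) ^ 2) ^ (m - (i : ℝ)) *
              Real.sqrt (1 + (c⁻¹ * ‖ξ‖) ^ 2) ^ (μ - (j : ℝ)))) := by ring
      _ ≤ C i j * ((4 : ℝ) ^ ((i : ℝ) - m) * S * Real.sqrt (1 + ‖ξ‖ ^ 2) ^ (mp - (j : ℝ))) :=
          mul_le_mul_of_nonneg_left
            (stmt18_numeric m μ mp hm hμ hmp i j c hc2 ‖x‖ ‖ξ‖ (norm_nonneg _) hx1) (hC i j)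
      _ = (C i j * ((4 : ℝ) ^ ((i : ℝ) - m) * S)) * Real.sqrt (1 + ‖ξ‖ ^ 2) ^ (mp - (j : ℝ)) := by
          ring
      _ ≤ ((C i j + 1) * ((4 : ℝ) ^ ((i : ℝ) - m) * S)) *
            Real.sqrt (1 + ‖ξ‖ ^ 2) ^ (mp - (j : ℝ)) := by
          refine mul_le_mul_of_nonneg_right
            (mul_le_mul_of_nonneg_right (by linarith) (by positivity)) hTnn
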